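/- Let q be a prime, let a be an integer with gcd(a, q) = 1, let n be a positive integer, and let m be a nonnegative integer. Then cos^{(m)}(2πna/q) = (i^m/(q−1)) Σ_ψ τ(ψ̄) ψ(a) ψ(n) + δ_m(n), where the sum runs over all nontrivial Dirichlet characters ψ modulo q satisfying ψ(−1) = (−1)^m, and δ_m(n) = 0 if m is odd, while δ_m(n) = (−1)^{m/2}·(1 − (q/(q−1))·𝟙_{q ∤ n}) if m is even (here 𝟙_{q ∤ n} equals 1 if q does not divide n and 0 otherwise). -/

import Mathlib

open Complex Real

open scoped Classical

-- L1: iterated derivative of cos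
lemma iteratedDeriv_cos_eq (m : ℕ) :
    iteratedDeriv m Complex.cos =
      fun x => (Complex.I ^ m * Complex.exp (Complex.I * x)
        + (-Complex.I) ^ m * Complex.exp (-(Complex.I * x))) / 2 := by
  induction m with
  | zero =>
    funext x
    simp [Complex.cos, mul_comm x Complex.I, add_comm, neg_mul, mul_neg]
  | succ m ih =>
    funext x
    rw [iteratedDeriv_succ, ih]
    have h1 : HasDerivAt (fun x : ℂ => (Complex.I ^ m * Complex.exp (Complex.I * x)
        + (-Complex.I) ^ m * Complex.exp (-(Complex.I * x))) / 2)
        ((Complex.I ^ (m+1) * Complex.exp (Complex.I * x)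
        + (-Complex.I) ^ (m+1) * Complex.exp (-(Complex.I * x))) / 2) x := by
      have e1 : HasDerivAt (fun x : ℂ => Complex.exp (Complex.I * x))
          (Complex.I * Complex.exp (Complex.I * x)) x := by
        simpa [mul_comm] using ((hasDerivAt_id x).const_mul Complex.I).cexp
      have e2 : HasDerivAt (fun x : ℂ => Complex.exp (-(Complex.I * x)))
          (-Complex.I * Complex.exp (-(Complex.I * x))) x := by
        simpa [mul_comm, neg_mul] using (((hasDerivAt_id x).const_mul Complex.I).neg).cexp
      have := ((e1.const_mul (Complex.I ^ m)).add (e2.const_mul ((-Complex.I) ^ m))).div_const 2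
      refine this.congr_deriv ?_
      ring
    exact h1.deriv
open scoped Classical

lemma exp_val_eq (q : ℕ) [NeZero q] (k : ℤ) :
    Complex.exp (2 * (π:ℂ) * Complex.I * (((k : ZMod q)).val : ℂ) / q)
      = Complex.exp (2 * (π:ℂ) * Complex.I * (k : ℂ) / q) := by
  have hq : (q : ℂ) ≠ 0 := Nat.cast_ne_zero.mpr (NeZero.ne q)
  have h : ((((k : ZMod q)).val : ℤ) : ZMod q) = (k : ZMod q) := by
    simp [ZMod.natCast_val, ZMod.intCast_cast]
  have hd : (q:ℤ) ∣ k - (((k : ZMod q)).val : ℤ) := by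
    apply (ZMod.intCast_zmod_eq_zero_iff_dvd _ q).mp
    push_cast [h]
    ring
  obtain ⟨t, ht⟩ := hd
  have hval : ((((k : ZMod q)).val : ℤ) : ℂ) = (k : ℂ) - (q : ℂ) * (t : ℂ) := by
    have h2 : (((k : ZMod q)).val : ℤ) = k - q * t := by omega
    rw [h2]; push_cast; ring
  rw [show ((((k : ZMod q)).val : ℕ) : ℂ) = ((((k : ZMod q)).val : ℤ) : ℂ) by push_cast; ring,
    hval]
  have h3 : 2 * (π:ℂ) * Complex.I * ((k:ℂ) - (q:ℂ)*(t:ℂ)) / q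
      = 2 * (π:ℂ) * Complex.I * (k:ℂ) / q + (-t : ℤ) * (2 * (π:ℂ) * Complex.I) := by
    push_cast
    field_simp
    ring
  rw [h3, Complex.exp_add, Complex.exp_int_mul_two_pi_mul_I, mul_one]

lemma sum_exp_eq_zero (q : ℕ) [Fact (Nat.Prime q)] :
    ∑ b : ZMod q, Complex.exp (2 * (π:ℂ) * Complex.I * (b.val : ℂ) / q) = 0 := by
  have hq : q ≠ 0 := (Fact.out : Nat.Prime q).ne_zero
  have hprim := Complex.isPrimitiveRoot_exp q hq
  have h1 : ∀ b : ZMod q, Complex.exp (2 * (π:ℂ) * Complex.I * (b.val : ℂ) / q)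
      = Complex.exp (2 * (π:ℂ) * Complex.I / q) ^ (b.val) := by
    intro b
    rw [← Complex.exp_nat_mul]
    ring_nf
  simp_rw [h1]
  have h0 := hprim.geom_sum_eq_zero (Fact.out : Nat.Prime q).one_lt
  rw [← h0]
  exact Finset.sum_nbij' (fun b => b.val) (fun j => (j : ZMod q))
    (fun b _ => Finset.mem_range.mpr (ZMod.val_lt b))
    (fun j hj => Finset.mem_univ _)
    (fun b _ => (ZMod.natCast_rightInverse b))
    (fun j hj => ZMod.val_natCast_of_lt (Finset.mem_range.mp hj))
    (fun b _ => rfl)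
open scoped Classical

lemma conj_char_apply {q : ℕ} [Fact (Nat.Prime q)] (ψ : DirichletCharacter ℂ q) (b : ZMod q) :
    (starRingEnd ℂ) (ψ b) = ψ b⁻¹ := by
  rw [show (starRingEnd ℂ) (ψ b) = star (ψ b) from rfl, MulChar.star_apply',
    MulChar.inv_apply']

lemma one_char_apply {q : ℕ} [Fact (Nat.Prime q)] (u : ZMod q) :
    (1 : DirichletCharacter ℂ q) u = if IsUnit u then 1 else 0 := by
  split_ifs with h
  · exact MulChar.one_apply_coe h.unit
  · exact MulChar.map_nonunit _ h

lemma sum_chars_parity (q : ℕ) [Fact (Nat.Prime q)] (ε : ℂ) (hε : ε = 1 ∨ ε = -1)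
    (u : ZMod q) :
    ∑ ψ : DirichletCharacter ℂ q, (if ψ ≠ 1 ∧ ψ (-1) = ε then ψ u else 0)
      = ((q:ℂ)-1)/2 * ((if u = 1 then 1 else 0) + ε * (if u = -1 then 1 else 0))
        - (if ε = 1 then (if IsUnit u then 1 else 0) else 0) := by
  have hε2 : ε * ε = 1 := by rcases hε with h | h <;> simp [h]
  have hsplit : ∀ ψ : DirichletCharacter ℂ q,
      (if ψ ≠ 1 ∧ ψ (-1) = ε then ψ u else 0)
        = (ψ u + ε * (ψ (-1) * ψ u)) / 2
          - (if ψ = 1 then (if ψ (-1) = ε then ψ u else 0) else 0) := by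
    intro ψ
    have hpm : ψ (-1) = 1 ∨ ψ (-1) = -1 := by
      apply mul_self_eq_one_iff.mp
      rw [← map_mul]; norm_num
    have hkey : (if ψ (-1) = ε then ψ u else 0) = (ψ u + ε * (ψ (-1) * ψ u)) / 2 := by
      by_cases h : ψ (-1) = ε
      · rw [if_pos h, h, ← mul_assoc, hε2, one_mul]; ring
      · rw [if_neg h]
        have : ψ (-1) = -ε := by
          rcases hpm with h1 | h1 <;> rcases hε with h2 | h2 <;>
            simp_all
        rw [this, show ε * (-ε * ψ u) = -(ε*ε) * ψ u by ring, hε2]; ring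
    by_cases h1 : ψ = 1
    · subst h1
      rw [if_neg (by simp), if_pos rfl, ← hkey, sub_self]
    · rw [if_neg h1, sub_zero, ← hkey]
      by_cases h2 : ψ (-1) = ε <;> simp [h1, h2]
  simp_rw [hsplit]
  rw [Finset.sum_sub_distrib]
  have htot : ((Nat.totient q : ℕ) : ℂ) = (q : ℂ) - 1 := by
    rw [Nat.totient_prime (Fact.out : Nat.Prime q)]
    have : 1 ≤ q := (Fact.out : Nat.Prime q).one_lt.le
    push_cast [Nat.cast_sub this]
    ring
  have hunit : IsUnit (-1 : ZMod q) := isUnit_one.neg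
  have h2nd : ∑ ψ : DirichletCharacter ℂ q,
      (if ψ = 1 then (if ψ (-1) = ε then ψ u else 0) else 0)
        = (if ε = 1 then (if IsUnit u then 1 else 0) else 0) := by
    rw [Finset.sum_ite_eq' Finset.univ (1 : DirichletCharacter ℂ q)
      (fun ψ => if ψ (-1) = ε then ψ u else 0), if_pos (Finset.mem_univ _)]
    rw [one_char_apply, one_char_apply, if_pos hunit]
    by_cases h : ε = 1 <;> simp [h, eq_comm]
  rw [h2nd]
  congr 1
  have h1st : ∀ ψ : DirichletCharacter ℂ q, ψ (-1) * ψ u = ψ (-u) := by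
    intro ψ; rw [← map_mul]; ring_nf
  simp_rw [h1st]
  rw [show (∑ ψ : DirichletCharacter ℂ q, (ψ u + ε * ψ (-u)) / 2)
      = ((∑ ψ : DirichletCharacter ℂ q, ψ u) + ε * ∑ ψ : DirichletCharacter ℂ q, ψ (-u)) / 2 by
    rw [← Finset.sum_div, Finset.sum_add_distrib, Finset.mul_sum]]
  rw [DirichletCharacter.sum_characters_eq, DirichletCharacter.sum_characters_eq, htot]
  by_cases h2 : (-u : ZMod q) = 1
  · rw [if_pos h2, if_pos (neg_eq_iff_eq_neg.mp h2)]
    by_cases h1 : u = 1 <;> simp only [h1, if_true, if_false] <;> ring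
  · have h3 : ¬(u = -1) := fun h => h2 (by rw [h]; ring)
    rw [if_neg h2, if_neg h3]
    by_cases h1 : u = 1 <;> simp only [h1, if_true, if_false] <;> ring

/-- The identity expressing `cos⁽ᵐ⁾(2πna/q)` in terms of twists by the nontrivial
Dirichlet characters modulo a prime `q` of parity `(-1)^m`:
`cos⁽ᵐ⁾(2πna/q) = (iᵐ/(q-1)) ∑_ψ τ(ψ̄) ψ(a) ψ(n) + δₘ(n)`,
where `τ(ψ̄) = ∑_b ψ̄(b) exp(2πib/q)` is the Gauss sum of the conjugate character,
`δₘ(n) = 0` for `m` odd and `δₘ(n) = (-1)^{m/2}(1 - (q/(q-1))·𝟙_{q ∤ n})` for `m` even. -/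
theorem cos_deriv_character_decomposition (q : ℕ) [Fact (Nat.Prime q)]
    (a : ℤ) (ha : Int.gcd a q = 1) (n : ℕ) (hn : 0 < n) (m : ℕ) :
    iteratedDeriv m Complex.cos (2 * (π : ℂ) * n * a / q) =
      Complex.I ^ m / ((q : ℂ) - 1) *
        (∑ ψ : DirichletCharacter ℂ q,
          if ψ ≠ 1 ∧ ψ (-1) = (-1 : ℂ) ^ m then
            (∑ b : ZMod q,
              (starRingEnd ℂ) (ψ b) * Complex.exp (2 * (π : ℂ) * Complex.I * b.val / q)) *
              ψ (a : ZMod q) * ψ (n : ZMod q)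
          else 0) +
      (if m % 2 = 1 then 0
       else (-1 : ℂ) ^ (m / 2) *
         (1 - ((q : ℂ) / ((q : ℂ) - 1)) * (if ¬ q ∣ n then 1 else 0))) := by
  have hqp : Nat.Prime q := Fact.out
  have hq0 : (q : ℂ) ≠ 0 := Nat.cast_ne_zero.mpr hqp.ne_zero
  have hq1 : (q : ℂ) - 1 ≠ 0 := by
    intro h
    have h1 : (q : ℂ) = ((1 : ℕ) : ℂ) := by push_cast; linear_combination h
    exact hqp.ne_one (Nat.cast_injective h1)
  rw [iteratedDeriv_cos_eq]
  simp only []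
  set x : ℂ := 2 * (π : ℂ) * n * a / q with hx
  set ε : ℂ := (-1 : ℂ) ^ m with hε
  by_cases hdvd : q ∣ n
  · -- q divides n
    have hn0 : ((n : ZMod q)) = 0 := (ZMod.natCast_eq_zero_iff n q).mpr hdvd
    have hS : (∑ ψ : DirichletCharacter ℂ q,
        if ψ ≠ 1 ∧ ψ (-1) = ε then
          (∑ b : ZMod q,
            (starRingEnd ℂ) (ψ b) * Complex.exp (2 * (π : ℂ) * Complex.I * b.val / q)) *
            ψ (a : ZMod q) * ψ (n : ZMod q)
        else 0) = 0 := by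
      apply Finset.sum_eq_zero
      intro ψ _
      rw [hn0, MulChar.map_zero, mul_zero, ite_self]
    rw [hS, mul_zero, zero_add]
    obtain ⟨t, ht⟩ := id hdvd
    have hE : Complex.exp (Complex.I * x) = 1 := by
      rw [hx, ht]
      rw [show Complex.I * (2 * (π:ℂ) * ((q*t : ℕ):ℂ) * a / q) = ((t * a : ℤ):ℂ) * (2*π*Complex.I) by
        push_cast; field_simp]
      exact Complex.exp_int_mul_two_pi_mul_I _
    have hE' : Complex.exp (-(Complex.I * x)) = 1 := by
      rw [hx, ht]
      rw [show -(Complex.I * (2 * (π:ℂ) * ((q*t : ℕ):ℂ) * a / q)) = ((-(t * a) : ℤ):ℂ) * (2*π*Complex.I) by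
        push_cast; field_simp]
      exact Complex.exp_int_mul_two_pi_mul_I _
    rw [hE, hE', if_neg (not_not_intro hdvd)]
    rcases Nat.even_or_odd m with ⟨k, hk⟩ | ⟨k, hk⟩
    · have hm : m = 2 * k := by omega
      rw [hm]
      rw [if_neg (by omega), Nat.mul_div_cancel_left k (by norm_num)]
      rw [show ((2*k) : ℕ) = 2*k from rfl]
      rw [pow_mul, pow_mul, Complex.I_sq, show (-Complex.I)^2 = -1 by
        rw [neg_pow]; norm_num [Complex.I_sq]]
      ring
    · rw [hk, if_pos (by omega)]
      rw [pow_succ, pow_succ, pow_mul, pow_mul, Complex.I_sq, show (-Complex.I)^2 = -1 by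
        rw [neg_pow]; norm_num [Complex.I_sq]]
      ring
  · -- q does not divide n
    have hεpm : ε = 1 ∨ ε = -1 := by
      rcases Nat.even_or_odd m with hm | hm
      · left; rw [hε]; exact hm.neg_one_pow
      · right; rw [hε]; exact hm.neg_one_pow
    set c : ZMod q := (a : ZMod q) * (n : ZMod q) with hc
    have hnz_n : ((n : ZMod q)) ≠ 0 := fun h =>
      hdvd ((ZMod.natCast_eq_zero_iff n q).mp h)
    have hnz_a : ((a : ZMod q)) ≠ 0 := by
      intro h
      have h1 : (q:ℤ) ∣ a := (ZMod.intCast_zmod_eq_zero_iff_dvd a q).mp h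
      have h2 : (q:ℤ) ∣ (Int.gcd a q : ℤ) := Int.dvd_coe_gcd h1 dvd_rfl
      rw [ha] at h2
      have := Int.le_of_dvd one_pos h2
      have := hqp.two_le
      omega
    have hc0 : c ≠ 0 := mul_ne_zero hnz_a hnz_n
    set F : ZMod q → ℂ :=
      fun b => Complex.exp (2 * (π : ℂ) * Complex.I * (b.val : ℂ) / q) with hF
    have hF0 : F 0 = 1 := by
      rw [hF]; simp
    have hFc : F c = Complex.exp (Complex.I * x) := by
      have h1 : c = ((a * n : ℤ) : ZMod q) := by rw [hc]; push_cast; ring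
      rw [h1]
      simp only [hF]
      rw [exp_val_eq q (a * n)]
      congr 1
      rw [hx]; push_cast; ring
    have hFc' : F (-c) = Complex.exp (-(Complex.I * x)) := by
      have h1 : -c = ((-(a * n) : ℤ) : ZMod q) := by rw [hc]; push_cast; ring
      rw [h1]
      simp only [hF]
      rw [exp_val_eq q (-(a * n))]
      congr 1
      rw [hx]; push_cast; ring
    have hstep : ∀ ψ : DirichletCharacter ℂ q,
        (∑ b : ZMod q, (starRingEnd ℂ) (ψ b) *
            Complex.exp (2 * (π : ℂ) * Complex.I * (b.val : ℂ) / q)) *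
          ψ (a : ZMod q) * ψ (n : ZMod q)
        = ∑ b : ZMod q, F b * ψ (b⁻¹ * c) := by
      intro ψ
      rw [Finset.sum_mul, Finset.sum_mul]
      apply Finset.sum_congr rfl
      intro b _
      rw [conj_char_apply, hc, map_mul, map_mul]
      ring
    have hS : (∑ ψ : DirichletCharacter ℂ q,
        if ψ ≠ 1 ∧ ψ (-1) = ε then
          (∑ b : ZMod q,
            (starRingEnd ℂ) (ψ b) * Complex.exp (2 * (π : ℂ) * Complex.I * (b.val : ℂ) / q)) *
            ψ (a : ZMod q) * ψ (n : ZMod q)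
        else 0)
        = ((q:ℂ)-1)/2 * (F c + ε * F (-c)) + (if ε = 1 then 1 else 0) := by
      calc (∑ ψ : DirichletCharacter ℂ q,
          if ψ ≠ 1 ∧ ψ (-1) = ε then
            (∑ b : ZMod q,
              (starRingEnd ℂ) (ψ b) * Complex.exp (2 * (π : ℂ) * Complex.I * (b.val : ℂ) / q)) *
              ψ (a : ZMod q) * ψ (n : ZMod q)
          else 0)
          = ∑ ψ : DirichletCharacter ℂ q,
              if ψ ≠ 1 ∧ ψ (-1) = ε then (∑ b : ZMod q, F b * ψ (b⁻¹ * c)) else 0 :=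
            Finset.sum_congr rfl (fun ψ _ => if_congr Iff.rfl (hstep ψ) rfl)
        _ = ∑ ψ : DirichletCharacter ℂ q, ∑ b : ZMod q,
              (if ψ ≠ 1 ∧ ψ (-1) = ε then F b * ψ (b⁻¹ * c) else 0) := by
            apply Finset.sum_congr rfl
            intro ψ _
            split_ifs
            · rfl
            · exact Finset.sum_const_zero.symm
        _ = ∑ b : ZMod q, ∑ ψ : DirichletCharacter ℂ q,
              (if ψ ≠ 1 ∧ ψ (-1) = ε then F b * ψ (b⁻¹ * c) else 0) := Finset.sum_comm
        _ = ∑ b : ZMod q, F b *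
              ∑ ψ : DirichletCharacter ℂ q, (if ψ ≠ 1 ∧ ψ (-1) = ε then ψ (b⁻¹ * c) else 0) := by
            apply Finset.sum_congr rfl
            intro b _
            rw [Finset.mul_sum]
            apply Finset.sum_congr rfl
            intro ψ _
            rw [mul_ite, mul_zero]
        _ = ∑ b : ZMod q, F b *
              (((q:ℂ)-1)/2 * ((if b⁻¹*c = 1 then 1 else 0) + ε * (if b⁻¹*c = -1 then 1 else 0))
                - (if ε = 1 then (if IsUnit (b⁻¹*c) then 1 else 0) else 0)) := by
            apply Finset.sum_congr rfl
            intro b _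
            rw [sum_chars_parity q ε hεpm]
        _ = ∑ b : ZMod q,
              (((q:ℂ)-1)/2 * (if b = c then F b else 0)
                + ε*((q:ℂ)-1)/2 * (if b = -c then F b else 0)
                - (if ε = 1 then 1 else 0) * (F b - (if b = 0 then F b else 0))) := by
            apply Finset.sum_congr rfl
            intro b _
            have h1 : (b⁻¹*c = 1) = (b = c) := by
              apply propext
              by_cases hb : b = 0
              · simp only [hb, inv_zero, zero_mul]
                exact ⟨fun h => absurd h.symm one_ne_zero, fun h => absurd h.symm hc0⟩
              · exact inv_mul_eq_one₀ hb
            have h2 : (b⁻¹*c = -1) = (b = -c) := by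
              apply propext
              by_cases hb : b = 0
              · simp only [hb, inv_zero, zero_mul]
                constructor
                · intro h; exact absurd h.symm (neg_ne_zero.mpr one_ne_zero)
                · intro h; exact absurd (neg_eq_zero.mp h.symm) hc0
              · constructor
                · intro h
                  exact (inv_mul_eq_one₀ hb).mp (by rw [mul_neg, h]; ring)
                · intro h
                  rw [h, inv_neg, neg_mul, inv_mul_cancel₀ hc0]
            have h3 : (IsUnit (b⁻¹*c)) = ¬(b = 0) := by
              apply propext
              constructor
              · intro h hb
                rw [hb, inv_zero, zero_mul] at h
                exact h.ne_zero rfl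
              · intro hb
                exact isUnit_iff_ne_zero.mpr (mul_ne_zero (inv_ne_zero hb) hc0)
            simp only [h1, h2, h3]
            split_ifs <;> ring
        _ = ((q:ℂ)-1)/2 * F c + ε*((q:ℂ)-1)/2 * F (-c)
              - (if ε = 1 then 1 else 0) * ((0:ℂ) - 1) := by
            rw [Finset.sum_sub_distrib, Finset.sum_add_distrib]
            congr 1
            · congr 1
              · rw [← Finset.mul_sum, Finset.sum_ite_eq' Finset.univ c F,
                  if_pos (Finset.mem_univ _)]
              · rw [← Finset.mul_sum, Finset.sum_ite_eq' Finset.univ (-c) F,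
                  if_pos (Finset.mem_univ _)]
            · rw [← Finset.mul_sum, Finset.sum_sub_distrib]
              congr 2
              · exact sum_exp_eq_zero q
              · rw [Finset.sum_ite_eq' Finset.univ (0 : ZMod q) F,
                  if_pos (Finset.mem_univ _), hF0]
        _ = ((q:ℂ)-1)/2 * (F c + ε * F (-c)) + (if ε = 1 then 1 else 0) := by
            split_ifs <;> ring
    rw [hS, hFc, hFc', if_pos hdvd]
    rcases Nat.even_or_odd m with ⟨k, hk⟩ | ⟨k, hk⟩
    · have hm : m = 2 * k := by omega
      have hε1 : ε = 1 := by rw [hε, hm, pow_mul]; norm_num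
      rw [hε1, if_pos rfl, hm, if_neg (by omega), Nat.mul_div_cancel_left k (by norm_num)]
      rw [pow_mul, pow_mul, Complex.I_sq, show (-Complex.I)^2 = -1 by
        rw [neg_pow]; norm_num [Complex.I_sq]]
      field_simp
      ring
    · have hε1 : ε = -1 := by rw [hε, hk]; exact Odd.neg_one_pow ⟨k, rfl⟩
      rw [hε1, if_neg (by norm_num), hk]
      rw [pow_succ, pow_succ, pow_mul, pow_mul, Complex.I_sq, show (-Complex.I)^2 = -1 by
        rw [neg_pow]; norm_num [Complex.I_sq], if_pos (by omega)]
      field_simp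
      ring
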